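/- For the extended objective f(w) = min{ λ_min(√Q D_w √Q), 1 − w₁ − … − w_s } on the simplex Δ_s, if w* maximizes f over Δ_s and k* = Σᵢ wᵢ*, then the normalized vector p* with pᵢ* = wᵢ*/k* maximizes PG(p) = λ_min(√Q D_p √Q) over probability vectors, and PG(p*) = f(w*)/k*. The key homogeneity fact: PG(k·p) = k·PG(p) for any scalar k > 0. -/

import Mathlib

open Matrix

/-- The minimum eigenvalue of a symmetric matrix. -/
noncomputable def lamMin {m : Type*} [Fintype m] [DecidableEq m]
    (M : Matrix m m ℝ) : ℝ := sInf (spectrum ℝ M)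

/-- The block-diagonal matrix D_w = diag(w₁ Q₁₁⁻¹, …, w_s Q_ss⁻¹). -/
noncomputable def Dblk {s : ℕ} (r : Fin s → ℕ)
    (Q : Matrix ((i : Fin s) × Fin (r i)) ((i : Fin s) × Fin (r i)) ℝ)
    (w : Fin s → ℝ) :
    Matrix ((i : Fin s) × Fin (r i)) ((i : Fin s) × Fin (r i)) ℝ :=
  fun a b =>
    if h : a.1 = b.1 then
      w a.1 * (Matrix.of fun x y : Fin (r a.1) => Q ⟨a.1, x⟩ ⟨a.1, y⟩)⁻¹ a.2 (h.symm ▸ b.2)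
    else 0


open Pointwise

lemma lamMin_smul {m : Type*} [Fintype m] [DecidableEq m]
    (M : Matrix m m ℝ) {c : ℝ} (hc : 0 < c) :
    lamMin (c • M) = c * lamMin M := by
  unfold lamMin
  rw [show (c • M) = (Units.mk0 c hc.ne') • M from rfl,
    spectrum.unit_smul_eq_smul]
  rw [show (Units.mk0 c hc.ne') • spectrum ℝ M = c • spectrum ℝ M from rfl]
  rw [Real.sInf_smul_of_nonneg hc.le, smul_eq_mul]

lemma lamMin_zero {m : Type*} [Fintype m] [DecidableEq m] :
    lamMin (0 : Matrix m m ℝ) = 0 := by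
  unfold lamMin
  by_cases h : Nonempty m
  · haveI : Nontrivial (Matrix m m ℝ) := inferInstance
    rw [spectrum.zero_eq, csInf_singleton]
  · haveI : IsEmpty m := not_nonempty_iff.mp h
    haveI : Subsingleton (Matrix m m ℝ) := by
      constructor; intro a b; ext i j; exact absurd ⟨i⟩ h
    have : spectrum ℝ (0 : Matrix m m ℝ) = ∅ := by
      ext x; simp [spectrum.mem_iff, isUnit_of_subsingleton]
    rw [this, Real.sInf_empty]

lemma Dblk_smul {s : ℕ} (r : Fin s → ℕ)
    (Q : Matrix ((i : Fin s) × Fin (r i)) ((i : Fin s) × Fin (r i)) ℝ)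
    (w : Fin s → ℝ) (c : ℝ) :
    Dblk r Q (fun i => c * w i) = c • Dblk r Q w := by
  funext a b
  simp only [Dblk, Matrix.smul_apply, smul_eq_mul]
  split_ifs <;> ring

lemma Dblk_zero {s : ℕ} (r : Fin s → ℕ)
    (Q : Matrix ((i : Fin s) × Fin (r i)) ((i : Fin s) × Fin (r i)) ℝ) :
    Dblk r Q (fun _ => (0:ℝ)) = 0 := by
  funext a b
  simp only [Dblk, Matrix.zero_apply]
  split_ifs <;> simp

lemma lam_hom {s : ℕ} (r : Fin s → ℕ)
    (Q K : Matrix ((i : Fin s) × Fin (r i)) ((i : Fin s) × Fin (r i)) ℝ)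
    (w : Fin s → ℝ) {c : ℝ} (hc : 0 < c) :
    lamMin (K * Dblk r Q (fun i => c * w i) * K)
      = c * lamMin (K * Dblk r Q w * K) := by
  rw [Dblk_smul, Matrix.mul_smul, Matrix.smul_mul, lamMin_smul _ hc]

/-- If w* maximizes f(w) = min{λ_min(√Q D_w √Q), 1 − Σᵢ wᵢ} over the simplex
Δ_s = {w : wᵢ ≥ 0, Σ wᵢ ≤ 1}, and k* = Σᵢ wᵢ* > 0, then p* = w*/k* maximizes
PG(p) = λ_min(√Q D_p √Q) over probability vectors, and PG(p*) = f(w*)/k*. -/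
theorem extended_pseudoOptimal_points {s : ℕ} (r : Fin s → ℕ)
    (Q K : Matrix ((i : Fin s) × Fin (r i)) ((i : Fin s) × Fin (r i)) ℝ)
    (hQ : Q.PosDef) (hK : K.PosSemidef) (hKQ : K * K = Q)
    (wstar : Fin s → ℝ)
    (hws : (∀ i, 0 ≤ wstar i) ∧ ∑ i, wstar i ≤ 1)
    (hmax : ∀ w : Fin s → ℝ, (∀ i, 0 ≤ w i) → (∑ i, w i ≤ 1) →
      min (lamMin (K * Dblk r Q w * K)) (1 - ∑ i, w i)
        ≤ min (lamMin (K * Dblk r Q wstar * K)) (1 - ∑ i, wstar i))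
    (hkpos : 0 < ∑ i, wstar i) :
    (∀ p : Fin s → ℝ, (∀ i, 0 < p i) → (∑ i, p i = 1) →
      lamMin (K * Dblk r Q p * K)
        ≤ lamMin (K * Dblk r Q (fun i => wstar i / ∑ j, wstar j) * K)) ∧
    lamMin (K * Dblk r Q (fun i => wstar i / ∑ j, wstar j) * K)
      = min (lamMin (K * Dblk r Q wstar * K)) (1 - ∑ i, wstar i)
        / ∑ i, wstar i := by
  set k : ℝ := ∑ i, wstar i with hk
  set L : ℝ := lamMin (K * Dblk r Q wstar * K) with hL
  -- value at 0 vector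
  have h0 := hmax (fun _ => 0) (fun _ => le_refl 0) (by simp)
  rw [Dblk_zero] at h0
  simp only [Finset.sum_const_zero, sub_zero, Matrix.mul_zero, Matrix.zero_mul,
    lamMin_zero] at h0
  have hmin0 : (0:ℝ) ≤ min L (1 - k) := le_trans (by norm_num) h0
  have hL0 : 0 ≤ L := le_trans hmin0 (min_le_left _ _)
  have hk1 : 0 ≤ 1 - k := le_trans hmin0 (min_le_right _ _)
  -- L ≤ 1 - k
  have hle : L ≤ 1 - k := by
    by_contra hcon
    push_neg at hcon
    have hLpos : 0 < L := lt_of_le_of_lt hk1 hcon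
    set t : ℝ := ((1 - k) / L + 1) / 2 with ht
    have htr : (1 - k) / L < 1 := (div_lt_one hLpos).mpr hcon
    have ht0 : 0 < t := by positivity
    have ht1 : t < 1 := by
      rw [ht]; linarith
    have htL : 1 - k < t * L := by
      have : (1 - k) / L < t := by rw [ht]; linarith
      calc 1 - k = (1 - k) / L * L := by field_simp
        _ < t * L := by exact mul_lt_mul_of_pos_right this hLpos
    have hsum : ∑ i, (fun i => t * wstar i) i = t * k := by
      rw [← Finset.mul_sum]
    have h1 := hmax (fun i => t * wstar i)
      (fun i => mul_nonneg ht0.le (hws.1 i))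
      (by rw [hsum]; nlinarith)
    rw [lam_hom r Q K wstar ht0, hsum] at h1
    have hmineq : min L (1 - k) = 1 - k := min_eq_right hcon.le
    rw [hmineq] at h1
    have : 1 - k < min (t * L) (1 - t * k) :=
      lt_min htL (by nlinarith)
    linarith [this.trans_le h1]
  have hmineq : min L (1 - k) = L := min_eq_left hle
  have hpstar : lamMin (K * Dblk r Q (fun i => wstar i / k) * K) = k⁻¹ * L := by
    have : (fun i => wstar i / k) = (fun i => k⁻¹ * wstar i) := by
      funext i; rw [div_eq_mul_inv, mul_comm]
    rw [this, lam_hom r Q K wstar (inv_pos.mpr hkpos)]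
  constructor
  · intro p hp hpsum
    rw [hpstar]
    by_contra hcon
    push_neg at hcon
    set μ : ℝ := lamMin (K * Dblk r Q p * K) with hμ
    have hkL : L < k * μ := by
      have h := mul_lt_mul_of_pos_left hcon hkpos
      rwa [← mul_assoc, mul_inv_cancel₀ hkpos.ne', one_mul] at h
    have hμpos : 0 < μ := by nlinarith
    set c : ℝ := (1 + μ)⁻¹ with hc
    have h1μ : (0:ℝ) < 1 + μ := by linarith
    have hc0 : 0 < c := inv_pos.mpr h1μ
    have hsum : ∑ i, (fun i => c * p i) i = c := by
      rw [← Finset.mul_sum, hpsum, mul_one]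
    have hc1 : c ≤ 1 := by
      rw [hc]; rw [inv_le_one_iff₀]; right; linarith
    have h2 := hmax (fun i => c * p i)
      (fun i => mul_nonneg hc0.le (hp i).le) (by rw [hsum]; exact hc1)
    rw [lam_hom r Q K p hc0, hsum, ← hμ, hmineq] at h2
    have hcμ : c * μ = 1 - c := by
      rw [hc]; field_simp; ring
    rw [hcμ, min_self] at h2
    -- h2 : 1 - c ≤ L, i.e. μ/(1+μ) ≤ L
    have h3 : μ ≤ L * (1 + μ) := by
      have : 1 - c = μ / (1 + μ) := by rw [hc]; field_simp; ring
      rw [this, div_le_iff₀ h1μ] at h2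
      linarith [h2]
    nlinarith
  · rw [hpstar, hmineq, div_eq_mul_inv, mul_comm]
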